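/- For every integer k ≥ 1, the Laurent polynomial −k x^{k}(r_k(x) − r_{k−1}(x)) − k x^{k}(s_k(x) − s_{k−1}(x)) · (Σ_{l=1}^{2k} (−1)^{l−1}(l−1)! x^{−l}) is congruent to the constant k! modulo x^{−1}ℚ[x^{−1}]; that is, its coefficient of x^{j} vanishes for every j ≥ 1 and its constant coefficient equals k!. -/

import Mathlib

open Polynomial Finset LaurentPolynomial

-- ℚ-version of the absorption identity: (k+1) C(n,k+1) = (n-k) C(n,k)
lemma choose_succ_rat (n k : ℕ) :
    ((k : ℚ) + 1) * (n.choose (k+1) : ℚ) = ((n : ℚ) - k) * (n.choose k : ℚ) := by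
  have h1 := Nat.add_one_mul_choose_eq n k
  have h2 : (n+1).choose (k+1) = n.choose k + n.choose (k+1) := Nat.choose_succ_succ' n k
  rw [h2] at h1
  have := congrArg (Nat.cast : ℕ → ℚ) h1
  push_cast at this
  linear_combination -this

lemma key_id (mm n : ℕ) :
    ((mm : ℚ) + 2) * (n.choose (mm+2) : ℚ) =
      ((n : ℚ) + 1) * ((n+1).choose (mm+1) : ℚ)
        - (2 * (mm : ℚ) + 3) * (n.choose (mm+1) : ℚ)
        - ((mm : ℚ) + 1) * (n.choose mm : ℚ) := by
  have p : ((n+1).choose (mm+1) : ℚ) = (n.choose mm : ℚ) + (n.choose (mm+1) : ℚ) := by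
    exact_mod_cast congrArg (Nat.cast : ℕ → ℚ) (Nat.choose_succ_succ' n mm)
  have a1 := choose_succ_rat n mm
  have a2 := choose_succ_rat n (mm+1)
  rw [p]
  push_cast at a1 a2 ⊢
  linear_combination a2 + a1

noncomputable def psiC (m : ℕ) (d : ℤ) : ℚ :=
  if d < 0 then (-1 : ℚ)^(m + (-d-1).toNat) * ((-d-1).toNat.factorial : ℚ)
      * ((-d-1).toNat.choose m : ℚ)
  else 0

lemma psiC_neg (m n : ℕ) :
    psiC m (-((n : ℤ)+1)) = (-1 : ℚ)^(m + n) * (n.factorial : ℚ) * (n.choose m : ℚ) := by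
  have h : (-(-((n : ℤ)+1))-1).toNat = n := by omega
  rw [psiC, if_pos (by omega), h]

lemma psiC_nonneg (m : ℕ) (d : ℤ) (hd : 0 ≤ d) : psiC m d = 0 := by
  rw [psiC, if_neg (by omega)]

lemma psiC_rec (mm : ℕ) (d : ℤ) :
    ((mm : ℚ) + 2) * psiC (mm+2) d =
      (2 * (mm : ℚ) + 3) * psiC (mm+1) d + psiC (mm+1) (d-1)
        - ((mm : ℚ) + 1) * psiC mm d := by
  rcases lt_trichotomy d 0 with hd | hd | hd
  · obtain ⟨n, rfl⟩ : ∃ n : ℕ, d = -((n : ℤ)+1) := ⟨(-d-1).toNat, by omega⟩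
    have hsub : -((n : ℤ)+1) - 1 = -(((n+1 : ℕ) : ℤ)+1) := by push_cast; ring
    rw [hsub, psiC_neg, psiC_neg, psiC_neg, psiC_neg]
    have e1 : (-1 : ℚ)^(mm+2+n) = (-1)^(mm+n) := by
      rw [show mm+2+n = (mm+n)+2 from by omega, pow_add]; norm_num
    have e2 : (-1 : ℚ)^(mm+1+n) = -(-1)^(mm+n) := by
      rw [show mm+1+n = (mm+n)+1 from by omega, pow_succ]; ring
    have e3 : (-1 : ℚ)^(mm+1+(n+1)) = (-1)^(mm+n) := by
      rw [show mm+1+(n+1) = (mm+n)+2 from by omega, pow_add]; norm_num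
    have e4 : ((n+1).factorial : ℚ) = ((n : ℚ)+1) * (n.factorial : ℚ) := by
      rw [Nat.factorial_succ]; push_cast; ring
    rw [e1, e2, e3, e4]
    linear_combination ((-1 : ℚ)^(mm+n) * (n.factorial : ℚ)) * key_id mm n
  · subst hd
    have h1 : psiC (mm+1) (0-1) = 0 := by
      have : (0 : ℤ) - 1 = -(((0:ℕ) : ℤ)+1) := by norm_num
      rw [this, psiC_neg]
      simp [Nat.choose_eq_zero_of_lt]
    rw [h1, psiC_nonneg _ _ le_rfl, psiC_nonneg _ _ le_rfl, psiC_nonneg _ _ le_rfl]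
    ring
  · rw [psiC_nonneg _ _ hd.le, psiC_nonneg _ _ hd.le, psiC_nonneg _ _ hd.le,
      psiC_nonneg _ _ (by omega)]
    ring

-- coefficient helpers
lemma C_mul_coeff (a : ℚ) (p : LaurentPolynomial ℚ) (d : ℤ) :
    (LaurentPolynomial.C a * p).coeff d = a * p.coeff d := by
  have h : (LaurentPolynomial.C a : LaurentPolynomial ℚ) = AddMonoidAlgebra.single (0 : ℤ) a := by
    rw [single_eq_C_mul_T, T_zero, mul_one]
  rw [h, AddMonoidAlgebra.coeff_single_mul_apply, neg_zero, zero_add]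

lemma T_mul_coeff (n : ℤ) (p : LaurentPolynomial ℚ) (d : ℤ) :
    ((T n : LaurentPolynomial ℚ) * p).coeff d = p.coeff (d - n) := by
  have h : (T n : LaurentPolynomial ℚ) = AddMonoidAlgebra.single n (1 : ℚ) := rfl
  rw [h, AddMonoidAlgebra.coeff_single_mul_apply, one_mul, neg_add_eq_sub]

theorem congruence_4_2
    (r s : ℕ → Polynomial ℚ)
    (hr0 : r 0 = 0) (hr1 : r 1 = -1) (hs0 : s 0 = 1) (hs1 : s 1 = 1 + X)
    (hr : ∀ k : ℕ, 2 ≤ k →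
      r k = Polynomial.C (1 / (k : ℚ)) * (Polynomial.C (2 * (k : ℚ) - 1) + X) * r (k - 1)
              - Polynomial.C (((k : ℚ) - 1) / (k : ℚ)) * r (k - 2))
    (hs : ∀ k : ℕ, 2 ≤ k →
      s k = Polynomial.C (1 / (k : ℚ)) * (Polynomial.C (2 * (k : ℚ) - 1) + X) * s (k - 1)
              - Polynomial.C (((k : ℚ) - 1) / (k : ℚ)) * s (k - 2)) :
    ∀ k : ℕ, 1 ≤ k →
      letI E : LaurentPolynomial ℚ :=
        -(k : LaurentPolynomial ℚ) * toLaurent (r k - r (k - 1)) * T (k : ℤ)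
          - (k : LaurentPolynomial ℚ) * toLaurent (s k - s (k - 1)) * T (k : ℤ)
            * ∑ l ∈ Finset.Icc 1 (2 * k),
                LaurentPolynomial.C ((-1 : ℚ) ^ (l - 1) * ((l - 1).factorial : ℚ))
                  * T (-(l : ℤ))
      (∀ j : ℤ, 1 ≤ j → E.coeff j = 0) ∧ E.coeff 0 = (k.factorial : ℚ) := by
  intro k hk
  set f : LaurentPolynomial ℚ :=
    ∑ l ∈ Finset.Icc 1 (2 * k),
      LaurentPolynomial.C ((-1 : ℚ) ^ (l - 1) * ((l - 1).factorial : ℚ)) * T (-(l : ℤ))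
    with hfdef
  -- coefficients of f
  have hfc : ∀ d : ℤ, f.coeff d = ∑ l ∈ Finset.Icc 1 (2*k),
      (if -(l:ℤ) = d then ((-1:ℚ)^(l-1) * ((l-1).factorial : ℚ)) else 0) := by
    intro d
    rw [hfdef, AddMonoidAlgebra.coeff_sum, Finset.sum_apply']
    refine Finset.sum_congr rfl fun l _ => ?_
    rw [← single_eq_C_mul_T, AddMonoidAlgebra.coeff_single]
    exact Finsupp.single_apply
  have hf_nonneg : ∀ d : ℤ, 0 ≤ d → f.coeff d = 0 := by
    intro d hd
    rw [hfc]
    refine Finset.sum_eq_zero fun l hl => ?_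
    rw [Finset.mem_Icc] at hl
    rw [if_neg (by omega)]
  have hf_neg : ∀ n : ℕ, n + 1 ≤ 2*k → f.coeff (-((n:ℤ)+1)) = (-1:ℚ)^n * (n.factorial : ℚ) := by
    intro n hn
    rw [hfc, Finset.sum_eq_single (n+1)]
    · rw [if_pos (by push_cast; ring)]
      simp
    · intro l hl hne
      rw [if_neg (by omega)]
    · intro h
      exact absurd (Finset.mem_Icc.mpr ⟨by omega, by omega⟩) h
  -- the key Laurent polynomials
  set H : ℕ → LaurentPolynomial ℚ := fun m => toLaurent (r m) + toLaurent (s m) * f with hHdef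
  have hHrec : ∀ mm : ℕ, ∀ d : ℤ,
      (H (mm+2)).coeff d = (1/((mm:ℚ)+2)) * ((2*((mm:ℚ)+2)-1) * (H (mm+1)).coeff d + (H (mm+1)).coeff (d-1))
        - ((((mm:ℚ)+2)-1)/((mm:ℚ)+2)) * (H mm).coeff d := by
    intro mm d
    have hEq : H (mm+2) =
        LaurentPolynomial.C (1/((mm:ℚ)+2)) * (LaurentPolynomial.C (2*((mm:ℚ)+2)-1) * H (mm+1))
          + LaurentPolynomial.C (1/((mm:ℚ)+2)) * (T 1 * H (mm+1))
          - LaurentPolynomial.C ((((mm:ℚ)+2)-1)/((mm:ℚ)+2)) * H mm := by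
      simp only [hHdef]
      rw [hr (mm+2) (by omega), hs (mm+2) (by omega)]
      have e1 : mm + 2 - 1 = mm + 1 := rfl
      have e2 : mm + 2 - 2 = mm := rfl
      rw [e1, e2]
      push_cast
      simp only [map_sub, map_mul, map_add, Polynomial.toLaurent_C, Polynomial.toLaurent_X]
      ring
    rw [hEq, AddMonoidAlgebra.coeff_sub, Finsupp.sub_apply, AddMonoidAlgebra.coeff_add, Finsupp.add_apply, C_mul_coeff, C_mul_coeff, C_mul_coeff,
      C_mul_coeff, T_mul_coeff]
    ring
  -- main coefficient computation
  have main : ∀ m : ℕ, ∀ d : ℤ, (m : ℤ) - 2*k ≤ d → (H m).coeff d = psiC m d := by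
    intro m
    induction m using Nat.strong_induction_on with
    | _ m IH =>
      match m with
      | 0 =>
        intro d hd
        have h0 : H 0 = f := by
          simp [hHdef, hr0, hs0]
        rw [h0]
        rcases lt_or_ge d 0 with hneg | hpos
        · obtain ⟨n, rfl⟩ : ∃ n : ℕ, d = -((n:ℤ)+1) := ⟨(-d-1).toNat, by omega⟩
          rw [hf_neg n (by omega), psiC_neg]
          simp [mul_comm]
        · rw [hf_nonneg d hpos, psiC_nonneg _ _ hpos]
      | 1 =>
        intro d hd
        have h1 : H 1 = LaurentPolynomial.C (-1) * T 0 + (f + T 1 * f) := by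
          simp only [hHdef]
          rw [hr1, hs1]
          simp only [map_add, map_neg, map_one, Polynomial.toLaurent_X, T_zero]
          ring
        rw [h1, AddMonoidAlgebra.coeff_add, Finsupp.add_apply, AddMonoidAlgebra.coeff_add, Finsupp.add_apply, T_mul_coeff, ← single_eq_C_mul_T,
          AddMonoidAlgebra.coeff_single, Finsupp.single_apply]
        rcases lt_or_ge d 0 with hneg | hpos
        · obtain ⟨n, rfl⟩ : ∃ n : ℕ, d = -((n:ℤ)+1) := ⟨(-d-1).toNat, by omega⟩
          have hsub : -((n : ℤ)+1) - 1 = -(((n+1 : ℕ) : ℤ)+1) := by push_cast; ring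
          rw [hsub, hf_neg n (by omega), hf_neg (n+1) (by omega), psiC_neg,
            if_neg (by omega)]
          have e4 : ((n+1).factorial : ℚ) = ((n : ℚ)+1) * (n.factorial : ℚ) := by
            rw [Nat.factorial_succ]; push_cast; ring
          rw [e4]
          have e2 : (-1 : ℚ)^(n+1) = -(-1)^n := by rw [pow_succ]; ring
          have e3 : (-1 : ℚ)^(1+n) = -(-1)^n := by rw [show 1+n = n+1 from by omega, pow_succ]; ring
          rw [e2, e3]
          have : (n.choose 1 : ℚ) = n := by rw [Nat.choose_one_right]
          rw [this]
          ring
        · rcases eq_or_lt_of_le hpos with heq | hpos1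
          · rw [← heq]
            have h01 : (0:ℤ) - 1 = -(((0:ℕ):ℤ)+1) := by norm_num
            rw [hf_nonneg 0 le_rfl, h01, hf_neg 0 (by omega), psiC_nonneg _ _ le_rfl]
            norm_num
          · rw [if_neg (by omega), hf_nonneg d hpos, hf_nonneg (d-1) (by omega),
              psiC_nonneg _ _ hpos]
            ring
      | (mm+2) =>
        intro d hd
        rw [hHrec mm d,
          IH (mm+1) (by omega) d (by push_cast at hd ⊢; omega),
          IH (mm+1) (by omega) (d-1) (by push_cast at hd ⊢; omega),
          IH mm (by omega) d (by push_cast at hd ⊢; omega)]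
        have hps := psiC_rec mm d
        have hm0 : ((mm:ℚ)+2) ≠ 0 := by positivity
        push_cast
        field_simp
        linear_combination -hps
  -- relate E to H
  have hEeq : -(k : LaurentPolynomial ℚ) * toLaurent (r k - r (k - 1)) * T (k : ℤ)
        - (k : LaurentPolynomial ℚ) * toLaurent (s k - s (k - 1)) * T (k : ℤ) * f
      = LaurentPolynomial.C (-(k:ℚ)) * (T (k:ℤ) * (H k - H (k-1))) := by
    simp only [hHdef]
    rw [map_sub, map_sub]
    have hcast : ((k : ℕ) : LaurentPolynomial ℚ) = LaurentPolynomial.C ((k : ℕ) : ℚ) :=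
      (map_natCast LaurentPolynomial.C k).symm
    rw [hcast, map_neg]
    ring
  have hE : ∀ j : ℤ, 0 ≤ j →
      ((-(k : LaurentPolynomial ℚ) * toLaurent (r k - r (k - 1)) * T (k : ℤ)
        - (k : LaurentPolynomial ℚ) * toLaurent (s k - s (k - 1)) * T (k : ℤ) * f
        : LaurentPolynomial ℚ)).coeff j
      = -(k:ℚ) * (psiC k (j - k) - psiC (k-1) (j - k)) := by
    intro j hj
    rw [hEeq, C_mul_coeff, T_mul_coeff, AddMonoidAlgebra.coeff_sub, Finsupp.sub_apply,
      main k (j-k) (by omega), main (k-1) (j-k) (by omega)]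
  refine ⟨?_, ?_⟩
  · intro j hj
    rw [hE j (by omega)]
    have h1 : psiC k (j - k) = 0 := by
      rcases lt_or_ge (j - (k:ℤ)) 0 with hneg | hpos
      · obtain ⟨n, hn⟩ : ∃ n : ℕ, j - (k:ℤ) = -((n:ℤ)+1) := ⟨(-(j-(k:ℤ))-1).toNat, by omega⟩
        rw [hn, psiC_neg, Nat.choose_eq_zero_of_lt (by omega)]
        simp
      · exact psiC_nonneg _ _ hpos
    have h2 : psiC (k-1) (j - k) = 0 := by
      rcases lt_or_ge (j - (k:ℤ)) 0 with hneg | hpos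
      · obtain ⟨n, hn⟩ : ∃ n : ℕ, j - (k:ℤ) = -((n:ℤ)+1) := ⟨(-(j-(k:ℤ))-1).toNat, by omega⟩
        rw [hn, psiC_neg, Nat.choose_eq_zero_of_lt (by omega)]
        simp
      · exact psiC_nonneg _ _ hpos
    rw [h1, h2]
    ring
  · rw [hE 0 le_rfl]
    have hd : (0:ℤ) - k = -(((k-1 : ℕ):ℤ)+1) := by omega
    rw [hd, psiC_neg, psiC_neg]
    rw [Nat.choose_eq_zero_of_lt (by omega), Nat.choose_self]
    have hev : (-1:ℚ)^((k-1) + (k-1)) = 1 := by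
      rw [← two_mul, pow_mul]
      norm_num
    rw [hev]
    have hfact : (k.factorial : ℚ) = (k:ℚ) * ((k-1).factorial : ℚ) := by
      rw [← Nat.mul_factorial_pred (by omega)]
      push_cast
      ring
    rw [hfact]
    push_cast
    ring
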